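/- Let a ≥ 2 and m ≥ 0 be integers and let N be a subgroup of the unit group (ℤ/2^aℤ)^× containing the residue class of −5^m. Let U = (ℤ/2^aℤ) ⋊ N, with N acting by multiplication. Then the commutator subgroup U′ of U equals the subgroup 2·(ℤ/2^aℤ) of the normal factor, and the index |U : U′| equals 2·|N|. -/

import Mathlib

/-- The action of the unit group of `ZMod q` on `Multiplicative (ZMod q)` by
multiplication, as a homomorphism into the automorphism group. -/
def zmodMulAut (q : ℕ) : (ZMod q)ˣ →* MulAut (Multiplicative (ZMod q)) where
  toFun u := AddEquiv.toMultiplicative (DistribMulAction.toAddAut (ZMod q)ˣ (ZMod q) u)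
  map_one' := by ext x; simp
  map_mul' u v := by ext x; simp [SemigroupAction.mul_smul]

/-- If `N ≤ (ℤ/2^aℤ)^×` contains the class of `-5^m` and `U = (ℤ/2^aℤ) ⋊ N`, then
`U′ = 2·(ℤ/2^aℤ)` and `|U : U′| = 2·|N|`. -/
theorem commutator_semidirect_neg_five_pow (a : ℕ) (ha : 2 ≤ a) (m : ℕ)
    (N : Subgroup (ZMod (2 ^ a))ˣ)
    (hN : ∃ u ∈ N, ((u : (ZMod (2 ^ a))ˣ) : ZMod (2 ^ a)) = -(5 ^ m)) :
    commutator (Multiplicative (ZMod (2 ^ a)) ⋊[(zmodMulAut (2 ^ a)).comp N.subtype] N) =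
      Subgroup.map SemidirectProduct.inl
        (AddSubgroup.toSubgroup (AddSubgroup.zmultiples ((2 : ZMod (2 ^ a))))) ∧
    (commutator (Multiplicative (ZMod (2 ^ a)) ⋊[(zmodMulAut (2 ^ a)).comp N.subtype] N)).index =
      2 * Nat.card N := by
  obtain ⟨u, huN, huval⟩ := hN
  have haz : a ≠ 0 := by omega
  have hdvd : (2 : ℕ) ∣ 2 ^ a := dvd_pow_self 2 haz
  set φ := (zmodMulAut (2 ^ a)).comp N.subtype with hφ
  set T : Subgroup (Multiplicative (ZMod (2 ^ a))) :=
    AddSubgroup.toSubgroup (AddSubgroup.zmultiples ((2 : ZMod (2 ^ a)))) with hT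
  -- the reduction mod 2
  let c : ZMod (2 ^ a) →+* ZMod 2 := ZMod.castHom hdvd (ZMod 2)
  have hcast_unit : ∀ v : (ZMod (2 ^ a))ˣ, c (v : ZMod (2 ^ a)) = 1 := by
    intro v
    have h1 : IsUnit (c (v : ZMod (2 ^ a))) := (v.isUnit).map c
    have h2 : ∀ x : ZMod 2, x ≠ 0 → x = 1 := by decide
    exact h2 _ h1.ne_zero
  have hc2 : c (2 : ZMod (2 ^ a)) = 0 := by
    rw [show (2 : ZMod (2 ^ a)) = ((2 : ℕ) : ZMod (2 ^ a)) by push_cast; rfl, map_natCast]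
    decide
  -- the multiplicative version of c
  let f₁ : Multiplicative (ZMod (2 ^ a)) →* Multiplicative (ZMod 2) :=
    AddMonoidHom.toMultiplicative c.toAddMonoidHom
  have hφapp : ∀ (n : N) (x : ZMod (2 ^ a)),
      φ n (Multiplicative.ofAdd x)
        = Multiplicative.ofAdd (((n : (ZMod (2 ^ a))ˣ) : ZMod (2 ^ a)) * x) := fun n x => rfl
  have hf₁φ : ∀ (n : N) (x : Multiplicative (ZMod (2 ^ a))), f₁ (φ n x) = f₁ x := by
    intro n x
    have h := hφapp n x.toAdd
    rw [show Multiplicative.ofAdd x.toAdd = x from rfl] at h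
    rw [h]
    show Multiplicative.ofAdd (c (((n : (ZMod (2 ^ a))ˣ) : ZMod (2 ^ a)) * x.toAdd))
      = Multiplicative.ofAdd (c x.toAdd)
    rw [map_mul, hcast_unit, one_mul]
  -- the homomorphism to the abelian group
  let f₁' : Multiplicative (ZMod (2 ^ a)) →* Multiplicative (ZMod 2) × N := f₁.prod 1
  let f₂' : N →* Multiplicative (ZMod 2) × N :=
    (1 : N →* Multiplicative (ZMod 2)).prod (MonoidHom.id N)
  have hcompat : ∀ g : N, f₁'.comp (φ g).toMonoidHom
      = (MulAut.conj (f₂' g)).toMonoidHom.comp f₁' := by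
    intro g
    ext x
    · simp [f₁', f₂', MulAut.conj_apply, hf₁φ g]
    · simp [f₁', f₂']
  let F : (Multiplicative (ZMod (2 ^ a)) ⋊[φ] N) →* Multiplicative (ZMod 2) × N :=
    SemidirectProduct.lift f₁' f₂' hcompat
  have hFapp : ∀ g : Multiplicative (ZMod (2 ^ a)) ⋊[φ] N, F g = (f₁ g.left, g.right) := by
    intro g
    show f₁' g.left * f₂' g.right = _
    simp only [f₁', f₂', MonoidHom.prod_apply, MonoidHom.one_apply, MonoidHom.id_apply,
      Prod.mk_mul_mk, mul_one, one_mul]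
  -- membership in T
  have hmemT : ∀ x : Multiplicative (ZMod (2 ^ a)),
      x ∈ T ↔ ∃ k : ℤ, k • (2 : ZMod (2 ^ a)) = x.toAdd := by
    intro x
    show x.toAdd ∈ AddSubgroup.zmultiples ((2 : ZMod (2 ^ a))) ↔ _
    exact AddSubgroup.mem_zmultiples_iff
  -- kernel of F is map inl T
  have hker : F.ker = Subgroup.map SemidirectProduct.inl T := by
    ext g
    rw [MonoidHom.mem_ker, hFapp, Prod.mk_eq_one, Subgroup.mem_map]
    constructor
    · rintro ⟨h1, h2⟩
      refine ⟨g.left, (hmemT g.left).mpr ?_, ?_⟩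
      · have hc0 : c g.left.toAdd = 0 := by
          have := congrArg Multiplicative.toAdd h1
          exact this
        have _ : NeZero (2 ^ a) := ⟨by positivity⟩
        have hval : ((g.left.toAdd.val : ℕ) : ZMod 2) = 0 := by
          rw [ZMod.natCast_val]
          rwa [ZMod.castHom_apply] at hc0
        rw [ZMod.natCast_eq_zero_iff] at hval
        obtain ⟨k, hk⟩ := hval
        refine ⟨(k : ℤ), ?_⟩
        have h3 : ((g.left.toAdd.val : ℕ) : ZMod (2 ^ a)) = g.left.toAdd :=
          ZMod.natCast_rightInverse g.left.toAdd
        rw [← h3, hk]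
        push_cast [zsmul_eq_mul]
        ring
      · exact SemidirectProduct.ext rfl h2.symm
    · rintro ⟨t, ht, rfl⟩
      obtain ⟨k, hk⟩ := (hmemT t).mp ht
      constructor
      · show Multiplicative.ofAdd (c t.toAdd) = 1
        rw [← hk, map_zsmul, hc2, smul_zero]
        rfl
      · rfl
  -- commutator ≤ ker F
  have hle1 : commutator (Multiplicative (ZMod (2 ^ a)) ⋊[φ] N) ≤ F.ker :=
    Abelianization.commutator_subset_ker F
  -- the generator 2 is a commutator
  have h5mod : (5 : ℕ) ^ m % 4 = 1 := by
    rw [Nat.pow_mod]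
    simp
  obtain ⟨k, hk⟩ : ∃ k : ℕ, (5 : ℕ) ^ m = 4 * k + 1 := ⟨5 ^ m / 4, by omega⟩
  have hcop : Nat.Coprime (2 * k + 1) (2 ^ a) := by
    apply Nat.Coprime.pow_right
    rw [Nat.coprime_comm, Nat.Prime.coprime_iff_not_dvd Nat.prime_two]
    omega
  have hunit : IsUnit (((2 * k + 1 : ℕ) : ZMod (2 ^ a))) :=
    (ZMod.isUnit_iff_coprime (2 * k + 1) (2 ^ a)).mpr hcop
  obtain ⟨v, hv⟩ := hunit
  set nu : N := ⟨u, huN⟩ with hnu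
  set t : ZMod (2 ^ a) := -((v⁻¹ : (ZMod (2 ^ a))ˣ) : ZMod (2 ^ a)) with htdef
  have hcomm2 : ((u : (ZMod (2 ^ a))ˣ) : ZMod (2 ^ a)) * t + -t = 2 := by
    rw [huval, htdef]
    have h52 : ((5 : ZMod (2 ^ a)) ^ m + 1) = 2 * ((2 * k + 1 : ℕ) : ZMod (2 ^ a)) := by
      have h5 := congrArg (fun n : ℕ => (n : ZMod (2 ^ a))) hk
      push_cast at h5 ⊢
      rw [h5]; ring
    have hrw : -(5 : ZMod (2 ^ a)) ^ m * -((v⁻¹ : (ZMod (2 ^ a))ˣ) : ZMod (2 ^ a))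
        + - -((v⁻¹ : (ZMod (2 ^ a))ˣ) : ZMod (2 ^ a))
        = ((5 : ZMod (2 ^ a)) ^ m + 1) * ((v⁻¹ : (ZMod (2 ^ a))ˣ) : ZMod (2 ^ a)) := by ring
    rw [hrw, h52, ← hv, mul_assoc, Units.mul_inv, mul_one]
  have hgen : SemidirectProduct.inl (Multiplicative.ofAdd (2 : ZMod (2 ^ a)))
      ∈ commutator (Multiplicative (ZMod (2 ^ a)) ⋊[φ] N) := by
    open scoped commutatorElement in
    have heq : (SemidirectProduct.inl (Multiplicative.ofAdd (2 : ZMod (2 ^ a)))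
        : Multiplicative (ZMod (2 ^ a)) ⋊[φ] N)
        = ⁅(SemidirectProduct.inr nu : Multiplicative (ZMod (2 ^ a)) ⋊[φ] N),
            SemidirectProduct.inl (Multiplicative.ofAdd t)⁆ := by
      rw [commutatorElement_def, ← MonoidHom.map_inv SemidirectProduct.inr nu,
        ← MonoidHom.map_inv SemidirectProduct.inl (Multiplicative.ofAdd t),
        ← SemidirectProduct.inl_aut, ← map_mul, SemidirectProduct.inl_inj, hφapp]
      show Multiplicative.ofAdd (2 : ZMod (2 ^ a))
        = Multiplicative.ofAdd (((nu : (ZMod (2 ^ a))ˣ) : ZMod (2 ^ a)) * t + -t)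
      rw [show ((nu : (ZMod (2 ^ a))ˣ) : ZMod (2 ^ a)) * t + -t = 2 from hcomm2]
    rw [heq]
    exact Subgroup.commutator_mem_commutator (Subgroup.mem_top _) (Subgroup.mem_top _)
  -- map inl T ≤ commutator
  have hle2 : Subgroup.map SemidirectProduct.inl T
      ≤ commutator (Multiplicative (ZMod (2 ^ a)) ⋊[φ] N) := by
    rintro g hg
    rw [Subgroup.mem_map] at hg
    obtain ⟨x, hx, rfl⟩ := hg
    obtain ⟨j, hj⟩ := (hmemT x).mp hx
    have hx2 : (SemidirectProduct.inl x : Multiplicative (ZMod (2 ^ a)) ⋊[φ] N)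
        = (SemidirectProduct.inl (Multiplicative.ofAdd (2 : ZMod (2 ^ a)))
          : Multiplicative (ZMod (2 ^ a)) ⋊[φ] N) ^ j := by
      rw [← map_zpow]
      congr 1
      show x = Multiplicative.ofAdd (j • (2 : ZMod (2 ^ a)))
      rw [hj]
      rfl
    rw [hx2]
    exact zpow_mem hgen j
  have hcommEq : commutator (Multiplicative (ZMod (2 ^ a)) ⋊[φ] N)
      = Subgroup.map SemidirectProduct.inl T :=
    le_antisymm (hker ▸ hle1) hle2
  refine ⟨hcommEq, ?_⟩
  rw [hcommEq, ← hker, Subgroup.index_ker]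
  have hsurj : Function.Surjective F := by
    rintro ⟨z, n⟩
    refine ⟨⟨Multiplicative.ofAdd ((z.toAdd.val : ℕ) : ZMod (2 ^ a)), n⟩, ?_⟩
    rw [hFapp]
    refine Prod.ext ?_ rfl
    show Multiplicative.ofAdd (c ((z.toAdd.val : ℕ) : ZMod (2 ^ a))) = z
    rw [map_natCast]
    rw [show ((z.toAdd.val : ℕ) : ZMod 2) = z.toAdd from ZMod.natCast_rightInverse z.toAdd]
    rfl
  rw [MonoidHom.range_eq_top.mpr hsurj]
  rw [Nat.card_congr Subgroup.topEquiv.toEquiv, Nat.card_prod,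
    Nat.card_congr Multiplicative.toAdd, Nat.card_zmod]
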